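/- For a Courant algebroid Q, the quotient Q̄ = Q/Ω_Q with the induced bracket and anchor is a Lie O_X-algebroid: the induced bracket is skew-symmetric, satisfies the Jacobi identity, the Leibniz rule holds, and the induced anchor map Q̄ → T_X is well defined and a Lie algebra morphism. -/
import Mathlib


noncomputable section

/-- The "vector fields" on the algebraic model of the space with function ring `O`. -/
abbrev Vec (O : Type*) [CommRing O] [Algebra ℂ O] := Derivation ℂ O O

/-- Algebraic model of a Courant `O`-algebroid: an `O`-module `Q` equipped with a
Leibniz bracket, an `O`-linear anchor into vector fields, a symmetric `O`-bilinear
pairing, and a derivation `∂ : O → Q`, subject to the Courant axioms. -/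
structure CourantAlgebroid (O : Type*) [CommRing O] [Algebra ℂ O]
    (Q : Type*) [AddCommGroup Q] [Module O Q] where
  bracket : Q → Q → Q
  bracket_add_left : ∀ q₁ q₂ q₃, bracket (q₁ + q₂) q₃ = bracket q₁ q₃ + bracket q₂ q₃
  bracket_add_right : ∀ q₁ q₂ q₃, bracket q₁ (q₂ + q₃) = bracket q₁ q₂ + bracket q₁ q₃
  anchor : Q →ₗ[O] Vec O
  pair : Q →ₗ[O] Q →ₗ[O] O
  pair_symm : ∀ q₁ q₂, pair q₁ q₂ = pair q₂ q₁
  par : O → Q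
  par_add : ∀ f g, par (f + g) = par f + par g
  par_mul : ∀ f g, par (f * g) = f • par g + g • par f
  anchor_par : ∀ f, anchor (par f) = 0
  anchor_bracket : ∀ q₁ q₂, anchor (bracket q₁ q₂) = ⁅anchor q₁, anchor q₂⁆
  jacobi : ∀ q q₁ q₂, bracket q (bracket q₁ q₂)
      = bracket (bracket q q₁) q₂ + bracket q₁ (bracket q q₂)
  leibniz : ∀ (q₁ q₂ : Q) (f : O), bracket q₁ (f • q₂) = f • bracket q₁ q₂ + anchor q₁ f • q₂
  invar : ∀ q q₁ q₂, pair (bracket q q₁) q₂ + pair q₁ (bracket q q₂)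
      = anchor q (pair q₁ q₂)
  bracket_par : ∀ (q : Q) (f : O), bracket q (par f) = par (anchor q f)
  pair_par : ∀ (q : Q) (f : O), pair q (par f) = anchor q f
  symm_bracket : ∀ q₁ q₂, bracket q₁ q₂ + bracket q₂ q₁ = par (pair q₁ q₂)

/-- `Ω_Q`: the `O`-submodule of `Q` generated by the image of the derivation `∂`. -/
def CourantAlgebroid.Omega {O : Type*} [CommRing O] [Algebra ℂ O]
    {Q : Type*} [AddCommGroup Q] [Module O Q] (C : CourantAlgebroid O Q) : Submodule O Q :=
  Submodule.span O (Set.range C.par)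

/-- For a Courant algebroid `Q`, the quotient `Q̄ = Q/Ω_Q` with the
induced bracket and anchor is a Lie `O`-algebroid.  We express this through the
facts which make the induced structure well defined and a Lie algebroid:
the anchor kills `Ω_Q` (so it descends), `Ω_Q` is a two-sided Leibniz ideal
(so the bracket descends), the symmetrization of the bracket lands in `Ω_Q`
(skew-symmetry of the induced bracket), and the Jacobi identity, the Leibniz
rule and the anchor-morphism property hold (hence they descend verbatim). -/
theorem quotient_is_lie_algebroid
    (O : Type*) [CommRing O] [Algebra ℂ O]
    (Q : Type*) [AddCommGroup Q] [Module O Q]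
    (C : CourantAlgebroid O Q) :
    (∀ w ∈ C.Omega, C.anchor w = 0)
    ∧ (∀ (q : Q), ∀ w ∈ C.Omega, C.bracket q w ∈ C.Omega ∧ C.bracket w q ∈ C.Omega)
    ∧ (∀ q₁ q₂ : Q, C.bracket q₁ q₂ + C.bracket q₂ q₁ ∈ C.Omega)
    ∧ (∀ q q₁ q₂ : Q, C.bracket q (C.bracket q₁ q₂)
        = C.bracket (C.bracket q q₁) q₂ + C.bracket q₁ (C.bracket q q₂))
    ∧ (∀ (q₁ q₂ : Q) (f : O),
        C.bracket q₁ (f • q₂) = f • C.bracket q₁ q₂ + (C.anchor q₁ f) • q₂)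
    ∧ (∀ q₁ q₂ : Q, C.anchor (C.bracket q₁ q₂) = ⁅C.anchor q₁, C.anchor q₂⁆) := by
  have hpar : ∀ f, C.par f ∈ C.Omega := fun f =>
    Submodule.subset_span ⟨f, rfl⟩
  -- bracket with 0 on the right is 0
  have hzero : ∀ q : Q, C.bracket q 0 = 0 := by
    intro q
    have := C.bracket_add_right q 0 0
    rw [add_zero] at this
    exact left_eq_add.mp this
  -- Omega is a right Leibniz ideal
  have hright : ∀ (q : Q), ∀ w ∈ C.Omega, C.bracket q w ∈ C.Omega := by
    intro q w hw
    induction hw using Submodule.span_induction with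
    | mem x hx =>
        obtain ⟨f, rfl⟩ := hx
        rw [C.bracket_par]
        exact hpar _
    | zero => rw [hzero]; exact zero_mem _
    | add x y hx hy ihx ihy =>
        rw [C.bracket_add_right]; exact add_mem ihx ihy
    | smul a x hx ih =>
        rw [C.leibniz]
        exact add_mem (Submodule.smul_mem _ _ ih) (Submodule.smul_mem _ _ hx)
  have hanch : ∀ w ∈ C.Omega, C.anchor w = 0 := by
    intro w hw
    induction hw using Submodule.span_induction with
    | mem x hx => obtain ⟨f, rfl⟩ := hx; exact C.anchor_par f
    | zero => simp
    | add x y hx hy ihx ihy => rw [map_add, ihx, ihy, add_zero]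
    | smul a x hx ih => rw [map_smul, ih, smul_zero]
  have hsymm : ∀ q₁ q₂ : Q, C.bracket q₁ q₂ + C.bracket q₂ q₁ ∈ C.Omega := by
    intro q₁ q₂; rw [C.symm_bracket]; exact hpar _
  refine ⟨hanch, fun q w hw => ⟨hright q w hw, ?_⟩, hsymm, C.jacobi, C.leibniz,
    C.anchor_bracket⟩
  have : C.bracket w q = (C.bracket w q + C.bracket q w) - C.bracket q w := by abel
  rw [this]
  exact sub_mem (hsymm w q) (hright q w hw)
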